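/- There exist universal constants K, C > 0 such that the following holds. Fix ε > 0 with K d³ √ε ≤ 1. If A ∈ ℝ^{m × n_d} satisfies the RRCP with respect to G with constant ε and each W_i (i = 1,…,d) satisfies the WDC with constant ε, then for every nonzero x ∈ ℝ^k and every v ∈ ∂f(x), ‖v‖ ≤ (C d / 2^d) max(‖x‖, ‖x_*‖) + (2/2^{d/2}) ‖η‖. -/

import Mathlib

open scoped BigOperators ENNReal NNReal RealInnerProductSpace Matrix
open MeasureTheory ProbabilityTheory Real Filter

noncomputable section

namespace DPR

attribute [local instance] Classical.propDecidable

/-- Entrywise ReLU on Euclidean space. -/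
def reluE {p : ℕ} (v : EuclideanSpace ℝ (Fin p)) : EuclideanSpace ℝ (Fin p) :=
  WithLp.toLp 2 (fun i => max (v i) 0)

/-- Entrywise absolute value. -/
def absVecE {p : ℕ} (v : EuclideanSpace ℝ (Fin p)) : EuclideanSpace ℝ (Fin p) :=
  WithLp.toLp 2 (fun i => |v i|)

/-- Matrix–vector multiplication as a map between Euclidean spaces. -/
def mulVecE {p q : ℕ} (M : Matrix (Fin p) (Fin q) ℝ) (x : EuclideanSpace ℝ (Fin q)) :
    EuclideanSpace ℝ (Fin p) :=
  WithLp.toLp 2 (M.mulVec x)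

/-- The `ℓ`-th row of a matrix, as a Euclidean vector. -/
def rowE {p q : ℕ} (A : Matrix (Fin p) (Fin q) ℝ) (ℓ : Fin p) : EuclideanSpace ℝ (Fin q) :=
  WithLp.toLp 2 (fun j => A ℓ j)

/-- Spectral norm of a matrix (operator norm between Euclidean spaces). -/
def specNorm {p q : ℕ} (M : Matrix (Fin p) (Fin q) ℝ) : ℝ :=
  ‖LinearMap.toContinuousLinearMap (Matrix.toEuclideanLin M)‖

/-- Angle between two vectors. -/
def ang {p : ℕ} (x y : EuclideanSpace ℝ (Fin p)) : ℝ :=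
  Real.arccos (⟪x, y⟫ / (‖x‖ * ‖y‖))

/-- The matrix `M_{x̂ ↔ ŷ}` sending `x̂ ↦ ŷ`, `ŷ ↦ x̂`, and `span{x,y}ᗮ ↦ 0`. -/
def Mmat {p : ℕ} (x y : EuclideanSpace ℝ (Fin p)) : Matrix (Fin p) (Fin p) ℝ :=
  let xh : Fin p → ℝ := fun i => x i / ‖x‖
  let yh : Fin p → ℝ := fun i => y i / ‖y‖
  if ang x y = 0 then Matrix.vecMulVec xh xh
  else if ang x y = π then -(Matrix.vecMulVec xh xh)
  else ((Real.sin (ang x y)) ^ 2)⁻¹ •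
    (Matrix.vecMulVec xh yh + Matrix.vecMulVec yh xh
      - Real.cos (ang x y) • (Matrix.vecMulVec xh xh + Matrix.vecMulVec yh yh))

/-- The matrix `Q_{x,y}`. -/
def Qmat {p : ℕ} (x y : EuclideanSpace ℝ (Fin p)) : Matrix (Fin p) (Fin p) ℝ :=
  ((π - ang x y) / (2 * π)) • (1 : Matrix (Fin p) (Fin p) ℝ)
    + (Real.sin (ang x y) / (2 * π)) • Mmat x y

/-- `W_{+,x} = diag(Wx > 0) W`. -/
def Wplus {p q : ℕ} (W : Matrix (Fin p) (Fin q) ℝ) (x : EuclideanSpace ℝ (Fin q)) :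
    Matrix (Fin p) (Fin q) ℝ :=
  Matrix.diagonal (fun i => if 0 < W.mulVec x i then (1 : ℝ) else 0) * W

/-- The Weight Distribution Condition with constant `ε`. -/
def WDC {p q : ℕ} (W : Matrix (Fin p) (Fin q) ℝ) (ε : ℝ) : Prop :=
  ∀ x y : EuclideanSpace ℝ (Fin q), x ≠ 0 → y ≠ 0 →
    specNorm ((Wplus W x)ᵀ * Wplus W y - Qmat x y) ≤ ε

/-- `A_z = diag(sgn(Az)) A`. -/
def Asign {p q : ℕ} (A : Matrix (Fin p) (Fin q) ℝ) (z : EuclideanSpace ℝ (Fin q)) :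
    Matrix (Fin p) (Fin q) ℝ :=
  Matrix.diagonal (fun i => Real.sign (A.mulVec z i)) * A

/-- The matrix `Φ_{z,w}`. -/
def Phi {p : ℕ} (z w : EuclideanSpace ℝ (Fin p)) : Matrix (Fin p) (Fin p) ℝ :=
  if z ≠ 0 ∧ w ≠ 0 then
    ((π - 2 * ang z w) / π) • (1 : Matrix (Fin p) (Fin p) ℝ)
      + (2 * Real.sin (ang z w) / π) • Mmat z w
  else 0

/-- The generative network `G` with layer sizes `n 0, n 1, …, n d` and ReLU activations. -/
def net (n : ℕ → ℕ) : ∀ d : ℕ,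
    (∀ i : Fin d, Matrix (Fin (n (i + 1))) (Fin (n i)) ℝ) →
    EuclideanSpace ℝ (Fin (n 0)) → EuclideanSpace ℝ (Fin (n d))
  | 0, _, x => x
  | (d + 1), W, x => reluE (mulVecE (W (Fin.last d)) (net n d (fun i => W i.castSucc) x))

/-- The Range Restricted Concentration Property of `A` with respect to the net, with constant `ε`. -/
def RRCP (n : ℕ → ℕ) (d m : ℕ)
    (W : ∀ i : Fin d, Matrix (Fin (n (i + 1))) (Fin (n i)) ℝ)
    (A : Matrix (Fin m) (Fin (n d)) ℝ) (ε : ℝ) : Prop :=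
  ∀ x y x₁ x₂ x₃ x₄ : EuclideanSpace ℝ (Fin (n 0)),
    |⟪mulVecE ((Asign A (net n d W x))ᵀ * Asign A (net n d W y)
          - Phi (net n d W x) (net n d W y))
        (net n d W x₁ - net n d W x₂), net n d W x₃ - net n d W x₄⟫|
      ≤ 33 * ε * ‖net n d W x₁ - net n d W x₂‖ * ‖net n d W x₃ - net n d W x₄‖

/-- The objective function `f(x) = ½‖|A G(x)| − (|A G(x⋆)| + η)‖²`. -/
def objf (n : ℕ → ℕ) (d m : ℕ)
    (W : ∀ i : Fin d, Matrix (Fin (n (i + 1))) (Fin (n i)) ℝ)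
    (A : Matrix (Fin m) (Fin (n d)) ℝ)
    (xstar : EuclideanSpace ℝ (Fin (n 0))) (η : EuclideanSpace ℝ (Fin m))
    (x : EuclideanSpace ℝ (Fin (n 0))) : ℝ :=
  (1 / 2) * ‖absVecE (mulVecE A (net n d W x))
      - (absVecE (mulVecE A (net n d W xstar)) + η)‖ ^ 2

/-- Clarke generalized directional derivative. -/
def clarkeDeriv {k : ℕ} (f : EuclideanSpace ℝ (Fin k) → ℝ) (x u : EuclideanSpace ℝ (Fin k)) : ℝ :=
  Filter.limsup (fun p : EuclideanSpace ℝ (Fin k) × ℝ => (f (p.1 + p.2 • u) - f p.1) / p.2)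
    ((nhds x) ×ˢ (nhdsWithin 0 (Set.Ioi 0)))

/-- Clarke subdifferential. -/
def clarkeSubdiff {k : ℕ} (f : EuclideanSpace ℝ (Fin k) → ℝ) (x : EuclideanSpace ℝ (Fin k)) :
    Set (EuclideanSpace ℝ (Fin k)) :=
  {v | ∀ u, ⟪v, u⟫ ≤ clarkeDeriv f x u}

/-- The negation step of the DPR algorithm. -/
def negStep {k : ℕ} (f : EuclideanSpace ℝ (Fin k) → ℝ) (y : EuclideanSpace ℝ (Fin k)) :
    EuclideanSpace ℝ (Fin k) :=
  if f (-y) < f y then -y else y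

/-- `x` is a run of the DPR subgradient method for `f` with step size `α`. -/
def IsDPR {k : ℕ} (f : EuclideanSpace ℝ (Fin k) → ℝ) (α : ℝ)
    (x : ℕ → EuclideanSpace ℝ (Fin k)) : Prop :=
  ∀ t : ℕ, ∃ v ∈ clarkeSubdiff f (negStep f (x t)), x (t + 1) = negStep f (x t) - α • v

/-- The function `g`. -/
def gfun (θ : ℝ) : ℝ := Real.arccos (((π - θ) * Real.cos θ + Real.sin θ) / π)

/-- `θ̄_{i,x}`. -/
def thetaBar {k : ℕ} (xstar x : EuclideanSpace ℝ (Fin k)) : ℕ → ℝ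
  | 0 => ang x xstar
  | (i + 1) => gfun (thetaBar xstar x i)

/-- `θ̆_i`. -/
def thetaCheck : ℕ → ℝ
  | 0 => π
  | (i + 1) => gfun (thetaCheck i)

/-- `ρ_d`. -/
def rho (d : ℕ) : ℝ :=
  2 * Real.sin (thetaCheck d) / π
    + ((π - 2 * thetaCheck d) / π) *
      ∑ i ∈ Finset.range d, (Real.sin (thetaCheck i) / π) *
        ∏ j ∈ Finset.Ico (i + 1) d, (π - thetaCheck j) / π

/-- The vector `h_x`. -/
def hvec {k : ℕ} (d : ℕ) (xstar x : EuclideanSpace ℝ (Fin k)) : EuclideanSpace ℝ (Fin k) :=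
  ((2 : ℝ) ^ d)⁻¹ •
    ((((π - 2 * thetaBar xstar x d) / π)
        * (∏ i ∈ Finset.range d, (π - thetaBar xstar x i) / π) * ‖xstar‖) • (‖xstar‖⁻¹ • xstar)
      + (‖x‖ - ‖xstar‖ * (2 * Real.sin (thetaBar xstar x d) / π
          + ((π - 2 * thetaBar xstar x d) / π) *
            ∑ i ∈ Finset.range d, (Real.sin (thetaBar xstar x i) / π) *
              ∏ j ∈ Finset.Ico (i + 1) d, (π - thetaBar xstar x j) / π)) • (‖x‖⁻¹ • x))

/-- The set `S_β`. -/
def Sset {k : ℕ} (d : ℕ) (xstar : EuclideanSpace ℝ (Fin k)) (β : ℝ) :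
    Set (EuclideanSpace ℝ (Fin k)) :=
  {x | x ≠ 0 ∧ ‖hvec d xstar x‖ ≤ ((2 : ℝ) ^ d)⁻¹ * β * max ‖x‖ ‖xstar‖}

/-- The law of a `p × q` random matrix with i.i.d. `N(0, v)` entries. -/
def gaussMatrix (p q : ℕ) (v : ℝ≥0) : Measure (Fin p → Fin q → ℝ) :=
  Measure.pi fun _ : Fin p => Measure.pi fun _ : Fin q => gaussianReal 0 v

/-- The joint law of the independent Gaussian weights `W_1, …, W_d` (with `W_i` having
i.i.d. `N(0, 1/n_i)` entries) and the Gaussian measurement matrix `A` (with i.i.d.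
`N(0, 1/m)` entries). -/
def netMeasure (n : ℕ → ℕ) (d m : ℕ) :
    Measure ((∀ i : Fin d, Fin (n (i + 1)) → Fin (n i) → ℝ) × (Fin m → Fin (n d) → ℝ)) :=
  (Measure.pi fun i : Fin d => gaussMatrix (n (i + 1)) (n i) ((n (i + 1) : ℝ≥0))⁻¹).prod
    (gaussMatrix m (n d) ((m : ℝ≥0))⁻¹)

/-! ### Auxiliary lemmas -/

section Aux

lemma innerE {p : ℕ} (x y : EuclideanSpace ℝ (Fin p)) : ⟪x, y⟫ = ∑ i, x i * y i := by
  simp [PiLp.inner_apply, RCLike.inner_apply, mul_comm]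

lemma normsqE {p : ℕ} (x : EuclideanSpace ℝ (Fin p)) : ‖x‖ ^ 2 = ∑ i, (x i) ^ 2 := by
  rw [← real_inner_self_eq_norm_sq, innerE]
  simp [sq]

lemma mulVecE_eq {p q : ℕ} (M : Matrix (Fin p) (Fin q) ℝ) (u : EuclideanSpace ℝ (Fin q)) :
    mulVecE M u = LinearMap.toContinuousLinearMap (Matrix.toEuclideanLin M) u := rfl

lemma inner_mulVecE_le {p q : ℕ} (M : Matrix (Fin p) (Fin q) ℝ)
    (u : EuclideanSpace ℝ (Fin q)) (v : EuclideanSpace ℝ (Fin p)) :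
    |⟪mulVecE M u, v⟫| ≤ specNorm M * ‖u‖ * ‖v‖ := by
  rw [mulVecE_eq]
  calc |⟪LinearMap.toContinuousLinearMap (Matrix.toEuclideanLin M) u, v⟫|
      ≤ ‖LinearMap.toContinuousLinearMap (Matrix.toEuclideanLin M) u‖ * ‖v‖ :=
        abs_real_inner_le_norm _ _
    _ ≤ specNorm M * ‖u‖ * ‖v‖ := by
        apply mul_le_mul_of_nonneg_right _ (norm_nonneg _)
        exact (LinearMap.toContinuousLinearMap (Matrix.toEuclideanLin M)).le_opNorm u

lemma inner_transpose {p q : ℕ} (M : Matrix (Fin p) (Fin q) ℝ)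
    (u : EuclideanSpace ℝ (Fin q)) (v : EuclideanSpace ℝ (Fin p)) :
    ⟪mulVecE M u, v⟫ = ⟪u, mulVecE Mᵀ v⟫ := by
  rw [innerE, innerE]
  simp only [mulVecE, Matrix.mulVec, dotProduct, Matrix.transpose_apply,
    Finset.sum_mul, Finset.mul_sum]
  rw [Finset.sum_comm]
  apply Finset.sum_congr rfl
  intro i _
  apply Finset.sum_congr rfl
  intro j _
  ring

lemma normsq_mulVecE {p q : ℕ} (M : Matrix (Fin p) (Fin q) ℝ) (u : EuclideanSpace ℝ (Fin q)) :
    ‖mulVecE M u‖ ^ 2 = ⟪u, mulVecE (Mᵀ * M) u⟫ := by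
  rw [← real_inner_self_eq_norm_sq, inner_transpose]
  congr 1
  simp only [mulVecE, Matrix.mulVec_mulVec]

lemma ang_self {p : ℕ} {x : EuclideanSpace ℝ (Fin p)} (hx : x ≠ 0) : ang x x = 0 := by
  have h : ⟪x, x⟫ / (‖x‖ * ‖x‖) = 1 := by
    rw [real_inner_self_eq_norm_mul_norm]
    field_simp [norm_ne_zero_iff.2 hx]
  rw [ang, h, Real.arccos_one]

lemma Qmat_self {p : ℕ} {x : EuclideanSpace ℝ (Fin p)} (hx : x ≠ 0) :
    Qmat x x = (1/2 : ℝ) • (1 : Matrix (Fin p) (Fin p) ℝ) := by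
  rw [Qmat, ang_self hx]
  rw [Real.sin_zero, sub_zero, zero_div, zero_smul, add_zero]
  congr 1
  field_simp

lemma Phi_self {p : ℕ} (x : EuclideanSpace ℝ (Fin p)) :
    ∀ w : EuclideanSpace ℝ (Fin p), ⟪mulVecE (Phi x x) w, w⟫ ≤ ‖w‖ ^ 2 := by
  intro w
  by_cases hx : x = 0
  · rw [Phi, if_neg (by simp [hx])]
    simp [mulVecE, Matrix.zero_mulVec]
    try positivity
  · rw [Phi, if_pos ⟨hx, hx⟩, ang_self hx]
    rw [Real.sin_zero]
    simp only [mul_zero, zero_div, zero_smul, add_zero, mul_zero, sub_zero]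
    rw [div_self Real.pi_ne_zero, one_smul]
    rw [show mulVecE (1 : Matrix (Fin p) (Fin p) ℝ) w = w from by
      simp [mulVecE, Matrix.one_mulVec]]
    rw [real_inner_self_eq_norm_sq]

lemma wdc_sq {p q : ℕ} {W : Matrix (Fin p) (Fin q) ℝ} {ε : ℝ} (hW : WDC W ε)
    {w : EuclideanSpace ℝ (Fin q)} (hw : w ≠ 0) (u : EuclideanSpace ℝ (Fin q)) :
    ‖mulVecE (Wplus W w) u‖ ^ 2 ≤ (1/2 + ε) * ‖u‖ ^ 2 := by
  rw [normsq_mulVecE]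
  have hdecomp : (Wplus W w)ᵀ * Wplus W w
      = ((Wplus W w)ᵀ * Wplus W w - Qmat w w) + Qmat w w := by abel
  have hQ : mulVecE ((Wplus W w)ᵀ * Wplus W w) u
      = mulVecE ((Wplus W w)ᵀ * Wplus W w - Qmat w w) u + mulVecE (Qmat w w) u := by
    conv_lhs => rw [hdecomp]
    simp only [mulVecE, Matrix.add_mulVec, Matrix.sub_mulVec, WithLp.toLp_add]
  rw [hQ, inner_add_right]
  have h1 : ⟪u, mulVecE ((Wplus W w)ᵀ * Wplus W w - Qmat w w) u⟫ ≤ ε * ‖u‖ ^ 2 := by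
    have hb := inner_mulVecE_le ((Wplus W w)ᵀ * Wplus W w - Qmat w w) u u
    have h2 := hW w w hw hw
    have h3 : ⟪u, mulVecE ((Wplus W w)ᵀ * Wplus W w - Qmat w w) u⟫
        = ⟪mulVecE ((Wplus W w)ᵀ * Wplus W w - Qmat w w) u, u⟫ := real_inner_comm _ _
    rw [h3]
    calc ⟪mulVecE ((Wplus W w)ᵀ * Wplus W w - Qmat w w) u, u⟫
        ≤ |⟪mulVecE ((Wplus W w)ᵀ * Wplus W w - Qmat w w) u, u⟫| := le_abs_self _
      _ ≤ specNorm ((Wplus W w)ᵀ * Wplus W w - Qmat w w) * ‖u‖ * ‖u‖ := hb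
      _ ≤ ε * ‖u‖ ^ 2 := by nlinarith [norm_nonneg u, sq_nonneg ‖u‖]
  have h2b : ⟪u, mulVecE (Qmat w w) u⟫ = (1/2) * ‖u‖ ^ 2 := by
    rw [Qmat_self hw]
    have h5 : mulVecE ((1/2 : ℝ) • (1 : Matrix (Fin q) (Fin q) ℝ)) u = (1/2 : ℝ) • u := by
      simp only [mulVecE, Matrix.smul_mulVec, Matrix.one_mulVec, WithLp.toLp_smul, WithLp.toLp_ofLp]
    rw [h5, real_inner_smul_right, real_inner_self_eq_norm_sq]
  rw [h2b]
  linarith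

lemma norm_wplus_le {p q : ℕ} {W : Matrix (Fin p) (Fin q) ℝ} {ε : ℝ} (hε : 0 ≤ ε) (hW : WDC W ε)
    {w : EuclideanSpace ℝ (Fin q)} (hw : w ≠ 0) (u : EuclideanSpace ℝ (Fin q)) :
    ‖mulVecE (Wplus W w) u‖ ≤ Real.sqrt (1/2 + ε) * ‖u‖ := by
  have h := wdc_sq hW hw u
  have hεnn : (0:ℝ) ≤ 1/2 + ε := by linarith
  have h2 : ‖mulVecE (Wplus W w) u‖ = Real.sqrt (‖mulVecE (Wplus W w) u‖ ^ 2) := by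
    rw [Real.sqrt_sq (norm_nonneg _)]
  rw [h2]
  calc Real.sqrt (‖mulVecE (Wplus W w) u‖ ^ 2) ≤ Real.sqrt ((1/2 + ε) * ‖u‖ ^ 2) :=
        Real.sqrt_le_sqrt h
    _ = Real.sqrt (1/2 + ε) * ‖u‖ := by
        rw [Real.sqrt_mul hεnn, Real.sqrt_sq (norm_nonneg _)]

lemma mulVec_coord {p q : ℕ} (W : Matrix (Fin p) (Fin q) ℝ)
    (z u : EuclideanSpace ℝ (Fin q)) (t : ℝ) (i : Fin p) :
    W.mulVec (z + t • u) i = W.mulVec z i + t * W.mulVec u i := by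
  have h : (z + t • u : EuclideanSpace ℝ (Fin q)) = (fun j => z j + t * u j : Fin q → ℝ) := rfl
  change (W *ᵥ (fun j => z j + t * u j)) i = _
  simp only [Matrix.mulVec, dotProduct, mul_add, Finset.sum_add_distrib, Finset.mul_sum]
  congr 1
  apply Finset.sum_congr rfl
  intro j _
  ring

lemma wplus_coord {p q : ℕ} (W : Matrix (Fin p) (Fin q) ℝ)
    (w u : EuclideanSpace ℝ (Fin q)) (i : Fin p) :
    mulVecE (Wplus W w) u i = (if 0 < W.mulVec w i then (1:ℝ) else 0) * W.mulVec u i := by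
  simp only [mulVecE, Wplus, ← Matrix.mulVec_mulVec, Matrix.mulVec_diagonal]

lemma relu_coord_deriv (a b t0 : ℝ) :
    HasDerivWithinAt (fun t => max (a + t * b) 0)
      (if 0 < a + t0 * b ∨ (a + t0 * b = 0 ∧ 0 < b) then b else 0) (Set.Ici t0) t0 := by
  have hlin : HasDerivAt (fun t : ℝ => a + t * b) b t0 :=
    (hasDerivAt_mul_const b).const_add a
  rcases lt_trichotomy (a + t0 * b) 0 with hneg | hzero | hpos
  · rw [if_neg (by push_neg; exact ⟨by linarith, fun h => absurd h (by linarith)⟩)]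
    have hev : (fun t => max (a + t * b) 0) =ᶠ[nhds t0] (fun _ => (0:ℝ)) := by
      have hcont : ContinuousAt (fun t : ℝ => a + t * b) t0 := hlin.continuousAt
      have hl := hcont.eventually_lt_const hneg
      filter_upwards [hl] with t ht
      exact max_eq_right (le_of_lt ht)
    exact ((hasDerivAt_const t0 (0:ℝ)).congr_of_eventuallyEq hev).hasDerivWithinAt
  · by_cases hb : 0 < b
    · rw [if_pos (Or.inr ⟨hzero, hb⟩)]
      apply (hlin.hasDerivWithinAt).congr
      · intro t ht
        have hnn : 0 ≤ a + t * b := by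
          have heq : a + t * b = (a + t0 * b) + (t - t0) * b := by ring
          rw [heq, hzero, zero_add]
          exact mul_nonneg (by linarith [Set.mem_Ici.1 ht]) hb.le
        exact max_eq_left hnn
      · rw [hzero]; simp
    · rw [if_neg (by push_neg; exact ⟨by linarith, fun _ => le_of_not_gt hb⟩)]
      apply (hasDerivWithinAt_const t0 (Set.Ici t0) (0:ℝ)).congr
      · intro t ht
        have hnp : a + t * b ≤ 0 := by
          have heq : a + t * b = (a + t0 * b) + (t - t0) * b := by ring
          rw [heq, hzero, zero_add]
          exact mul_nonpos_of_nonneg_of_nonpos (by linarith [Set.mem_Ici.1 ht]) (le_of_not_gt hb)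
        exact max_eq_right hnp
      · rw [hzero]; simp
  · rw [if_pos (Or.inl hpos)]
    have hev : (fun t => max (a + t * b) 0) =ᶠ[nhds t0] (fun t => a + t * b) := by
      have hcont : ContinuousAt (fun t : ℝ => a + t * b) t0 := hlin.continuousAt
      have hl := hcont.eventually_const_lt hpos
      filter_upwards [hl] with t ht
      exact max_eq_left (le_of_lt ht)
    exact (hlin.congr_of_eventuallyEq hev).hasDerivWithinAt

lemma layer_lip {p q : ℕ} {W : Matrix (Fin p) (Fin q) ℝ} {ε : ℝ} (hε : 0 ≤ ε) (hW : WDC W ε)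
    (z z' : EuclideanSpace ℝ (Fin q)) :
    ‖reluE (mulVecE W z') - reluE (mulVecE W z)‖ ≤ Real.sqrt (1/2 + ε) * ‖z' - z‖ := by
  set u : EuclideanSpace ℝ (Fin q) := z' - z with hu
  by_cases hu0 : u = 0
  · have hzz : z' = z := sub_eq_zero.1 hu0
    rw [hzz, sub_self, norm_zero]
    positivity
  set h : ℝ → EuclideanSpace ℝ (Fin p) := fun t => reluE (mulVecE W (z + t • u)) with hh
  set g : ℝ → EuclideanSpace ℝ (Fin p) := fun t => WithLp.toLp 2 (fun i =>
    if 0 < W.mulVec (z + t • u) i ∨ (W.mulVec (z + t • u) i = 0 ∧ 0 < W.mulVec u i)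
    then W.mulVec u i else 0) with hg
  set C : ℝ := Real.sqrt (1/2 + ε) * ‖u‖ with hC
  have hderiv : ∀ t ∈ Set.Ico (0:ℝ) 1, HasDerivWithinAt h (g t) (Set.Ici t) t := by
    intro t _
    have hpi : HasDerivWithinAt
        (fun s : ℝ => (fun i => max (W.mulVec (z + s • u) i) 0 : Fin p → ℝ))
        (fun i => if 0 < W.mulVec (z + t • u) i ∨
            (W.mulVec (z + t • u) i = 0 ∧ 0 < W.mulVec u i)
          then W.mulVec u i else 0 : Fin p → ℝ) (Set.Ici t) t := by
      apply hasDerivWithinAt_pi.2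
      intro i
      simp only [mulVec_coord]
      exact relu_coord_deriv _ _ _
    exact (((PiLp.continuousLinearEquiv 2 ℝ (fun _ : Fin p => ℝ)).symm :
      (Fin p → ℝ) →L[ℝ] EuclideanSpace ℝ (Fin p)).hasFDerivAt.comp_hasDerivWithinAt t hpi)
  have hbound : ∀ t ∈ Set.Ico (0:ℝ) 1, ‖g t‖ ≤ C := by
    intro t _
    have hev : ∀ᶠ δ in nhdsWithin (0:ℝ) (Set.Ioi 0),
        (∀ i : Fin p, (0 < W.mulVec (z + t • u) i + δ * W.mulVec u i ↔
          (0 < W.mulVec (z + t • u) i ∨ (W.mulVec (z + t • u) i = 0 ∧ 0 < W.mulVec u i))))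
        ∧ z + t • u + δ • u ≠ 0 := by
      apply Filter.Eventually.and
      · rw [eventually_all]
        intro i
        set α := W.mulVec (z + t • u) i
        set β := W.mulVec u i
        rcases lt_trichotomy α 0 with hα | hα | hα
        · have htend : Tendsto (fun δ : ℝ => α + δ * β) (nhdsWithin 0 (Set.Ioi 0)) (nhds α) := by
            have ht0 : Tendsto (fun δ : ℝ => α + δ * β) (nhds 0) (nhds (α + 0 * β)) := by
              apply Tendsto.const_add
              exact (tendsto_id.mul_const β)
            simpa using ht0.mono_left nhdsWithin_le_nhds
          filter_upwards [htend.eventually_lt_const hα] with δ hδ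
          constructor
          · intro hcon; linarith
          · rintro (hcon | ⟨hcon, _⟩) <;> linarith
        · filter_upwards [self_mem_nhdsWithin] with δ hδ
          have hδ0 : (0:ℝ) < δ := hδ
          constructor
          · intro hpos
            right
            refine ⟨hα, ?_⟩
            by_contra hb
            push_neg at hb
            nlinarith
          · rintro (hcon | ⟨_, hb⟩)
            · linarith
            · rw [hα]; simpa using mul_pos hδ0 hb
        · have htend : Tendsto (fun δ : ℝ => α + δ * β) (nhdsWithin 0 (Set.Ioi 0)) (nhds α) := by
            have ht0 : Tendsto (fun δ : ℝ => α + δ * β) (nhds 0) (nhds (α + 0 * β)) := by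
              apply Tendsto.const_add
              exact (tendsto_id.mul_const β)
            simpa using ht0.mono_left nhdsWithin_le_nhds
          filter_upwards [htend.eventually_const_lt hα] with δ hδ
          exact ⟨fun _ => Or.inl hα, fun _ => hδ⟩
      · by_cases hbad : ∃ δ0 : ℝ, z + t • u + δ0 • u = 0
        · obtain ⟨δ0, hδ0⟩ := hbad
          rcases le_or_gt δ0 0 with hle | hlt
          · filter_upwards [self_mem_nhdsWithin] with δ hδ
            intro hcon
            have hsm : (δ - δ0) • u = 0 := by
              calc (δ - δ0) • u = (z + t • u + δ • u) - (z + t • u + δ0 • u) := by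
                    rw [sub_smul]; abel
                _ = 0 := by rw [hcon, hδ0, sub_zero]
            have hδpos : (0:ℝ) < δ := hδ
            have hne : δ - δ0 ≠ 0 := by intro hc; have : δ = δ0 := by linarith
                                        linarith
            exact hu0 (by simpa [hne] using smul_eq_zero.1 hsm)
          · filter_upwards [Ioo_mem_nhdsGT_of_mem
              (show (0:ℝ) ∈ Set.Ico 0 δ0 from ⟨le_refl _, hlt⟩)] with δ hδ
            intro hcon
            have hsm : (δ - δ0) • u = 0 := by
              calc (δ - δ0) • u = (z + t • u + δ • u) - (z + t • u + δ0 • u) := by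
                    rw [sub_smul]; abel
                _ = 0 := by rw [hcon, hδ0, sub_zero]
            have hne : δ - δ0 ≠ 0 := sub_ne_zero.2 (ne_of_lt hδ.2)
            exact hu0 (by simpa [hne] using smul_eq_zero.1 hsm)
        · push_neg at hbad
          exact Filter.Eventually.of_forall fun δ => hbad δ
    obtain ⟨δ, hδ1, hδ2⟩ := hev.exists
    have hgt : g t = mulVecE (Wplus W (z + t • u + δ • u)) u := by
      ext i
      rw [wplus_coord]
      have hco : W.mulVec (z + t • u + δ • u) i = W.mulVec (z + t • u) i + δ * W.mulVec u i :=
        mulVec_coord W (z + t • u) u δ i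
      simp only [WithLp.ofLp_add, WithLp.ofLp_smul, hco]
      simp only [hg, PiLp.toLp_apply]
      by_cases hc : 0 < W.mulVec (z + t • u) i ∨
          (W.mulVec (z + t • u) i = 0 ∧ 0 < W.mulVec u i)
      · rw [if_pos hc, if_pos ((hδ1 i).2 hc), one_mul]
      · rw [if_neg hc, if_neg (fun hp => hc ((hδ1 i).1 hp)), zero_mul]
    rw [hgt]
    exact norm_wplus_le hε hW hδ2 u
  have hcont : ContinuousOn h (Set.Icc (0:ℝ) 1) := by
    have hcc : Continuous h := by
      have hpi : Continuous (fun s => (h s : Fin p → ℝ)) := by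
        apply continuous_pi
        intro i
        have heq : (fun s => h s i) = fun s => max (W.mulVec z i + s * W.mulVec u i) 0 := by
          funext s
          simp only [hh, reluE, mulVecE, WithLp.ofLp_add, WithLp.ofLp_smul, mulVec_coord]
        rw [heq]
        exact (continuous_const.add (continuous_id.mul continuous_const)).max continuous_const
      exact (PiLp.continuous_toLp 2 (fun _ : Fin p => ℝ)).comp hpi
    exact hcc.continuousOn
  have key := norm_image_sub_le_of_norm_deriv_right_le_segment hcont hderiv hbound 1
    (by constructor <;> norm_num)
  have h1 : h 1 = reluE (mulVecE W z') := by
    have hz : z + (1:ℝ) • u = z' := by rw [hu, one_smul]; abel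
    simp only [hh]
    rw [hz]
  have h0 : h 0 = reluE (mulVecE W z) := by
    simp only [hh, zero_smul, add_zero]
  rw [h1, h0] at key
  simpa using key

lemma netLip (n : ℕ → ℕ) {ε : ℝ} (hε : 0 ≤ ε) :
    ∀ (d : ℕ) (W : ∀ i : Fin d, Matrix (Fin (n (i + 1))) (Fin (n i)) ℝ),
    (∀ i, WDC (W i) ε) → ∀ y z : EuclideanSpace ℝ (Fin (n 0)),
    ‖net n d W y - net n d W z‖ ≤ (Real.sqrt (1/2 + ε)) ^ d * ‖y - z‖ := by
  intro d
  induction d with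
  | zero => intro W _ y z; simp [net]
  | succ d ih =>
    intro W hW y z
    have h1 := layer_lip hε (hW (Fin.last d)) (net n d (fun i => W i.castSucc) z)
      (net n d (fun i => W i.castSucc) y)
    have h2 := ih (fun i => W i.castSucc) (fun i => hW i.castSucc) y z
    calc ‖net n (d+1) W y - net n (d+1) W z‖
        ≤ Real.sqrt (1/2 + ε) * ‖net n d (fun i => W i.castSucc) y
            - net n d (fun i => W i.castSucc) z‖ := h1
      _ ≤ Real.sqrt (1/2 + ε) * ((Real.sqrt (1/2 + ε)) ^ d * ‖y - z‖) := by
          apply mul_le_mul_of_nonneg_left h2 (Real.sqrt_nonneg _)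
      _ = (Real.sqrt (1/2 + ε)) ^ (d+1) * ‖y - z‖ := by ring

lemma sign_sq (a b : ℝ) :
    (|a| - |b|)^2 ≤ (Real.sign a * (a - b))^2 + (Real.sign b * (a - b))^2 := by
  rcases lt_trichotomy a 0 with ha | ha | ha <;> rcases lt_trichotomy b 0 with hb | hb | hb
  · rw [Real.sign_of_neg ha, Real.sign_of_neg hb, abs_of_neg ha, abs_of_neg hb]; nlinarith
  · subst hb; rw [Real.sign_of_neg ha, Real.sign_zero, abs_of_neg ha, abs_zero]; nlinarith
  · rw [Real.sign_of_neg ha, Real.sign_of_pos hb, abs_of_neg ha, abs_of_pos hb]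
    nlinarith [mul_neg_of_neg_of_pos ha hb]
  · subst ha; rw [Real.sign_zero, Real.sign_of_neg hb, abs_zero, abs_of_neg hb]; nlinarith
  · subst ha; subst hb; simp
  · subst ha; rw [Real.sign_zero, Real.sign_of_pos hb, abs_zero, abs_of_pos hb]; nlinarith
  · rw [Real.sign_of_pos ha, Real.sign_of_neg hb, abs_of_pos ha, abs_of_neg hb]
    nlinarith [mul_neg_of_pos_of_neg ha hb]
  · subst hb; rw [Real.sign_of_pos ha, Real.sign_zero, abs_of_pos ha, abs_zero]; nlinarith
  · rw [Real.sign_of_pos ha, Real.sign_of_pos hb, abs_of_pos ha, abs_of_pos hb]; nlinarith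

lemma mulVecE_sub {p q : ℕ} (M N : Matrix (Fin p) (Fin q) ℝ) (w : EuclideanSpace ℝ (Fin q)) :
    mulVecE (M - N) w = mulVecE M w - mulVecE N w := by
  simp only [mulVecE, Matrix.sub_mulVec, WithLp.toLp_sub]

lemma absdiff_sq (n : ℕ → ℕ) (d m : ℕ)
    (W : ∀ i : Fin d, Matrix (Fin (n (i + 1))) (Fin (n i)) ℝ)
    (A : Matrix (Fin m) (Fin (n d)) ℝ) {ε : ℝ}
    (hR : RRCP n d m W A ε) (y z : EuclideanSpace ℝ (Fin (n 0))) :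
    ‖absVecE (mulVecE A (net n d W y)) - absVecE (mulVecE A (net n d W z))‖^2
      ≤ 2*(1+33*ε)*‖net n d W y - net n d W z‖^2 := by
  set Gy := net n d W y with hGy
  set Gz := net n d W z with hGz
  set w : EuclideanSpace ℝ (Fin (n d)) := Gy - Gz with hw
  have hAw : ∀ i, A.mulVec w i = A.mulVec Gy i - A.mulVec Gz i := by
    intro i
    have hsub : (w : Fin (n d) → ℝ) = fun j => Gy j - Gz j := rfl
    rw [hsub]
    simp only [Matrix.mulVec, dotProduct, mul_sub, Finset.sum_sub_distrib]
  have hAs : ∀ (y0 : EuclideanSpace ℝ (Fin (n 0))) (i : Fin m),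
      mulVecE (Asign A (net n d W y0)) w i
        = Real.sign (A.mulVec (net n d W y0) i) * (A.mulVec Gy i - A.mulVec Gz i) := by
    intro y0 i
    simp only [mulVecE, Asign, ← Matrix.mulVec_mulVec, Matrix.mulVec_diagonal]
    rw [hAw]
  have hterm : ∀ y0 : EuclideanSpace ℝ (Fin (n 0)),
      ‖mulVecE (Asign A (net n d W y0)) w‖^2 ≤ (1+33*ε)*‖w‖^2 := by
    intro y0
    rw [normsq_mulVecE]
    have hRR := hR y0 y0 y z y z
    have hinner : ⟪w, mulVecE ((Asign A (net n d W y0))ᵀ * Asign A (net n d W y0)) w⟫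
        = ⟪mulVecE ((Asign A (net n d W y0))ᵀ * Asign A (net n d W y0)
            - Phi (net n d W y0) (net n d W y0)) w, w⟫
          + ⟪mulVecE (Phi (net n d W y0) (net n d W y0)) w, w⟫ := by
      conv_rhs => rw [mulVecE_sub, inner_sub_left]
      rw [real_inner_comm]
      ring
    rw [hinner]
    have h1 : ⟪mulVecE ((Asign A (net n d W y0))ᵀ * Asign A (net n d W y0)
        - Phi (net n d W y0) (net n d W y0)) w, w⟫ ≤ 33 * ε * ‖w‖^2 := by
      calc ⟪mulVecE ((Asign A (net n d W y0))ᵀ * Asign A (net n d W y0)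
            - Phi (net n d W y0) (net n d W y0)) w, w⟫
          ≤ |⟪mulVecE ((Asign A (net n d W y0))ᵀ * Asign A (net n d W y0)
            - Phi (net n d W y0) (net n d W y0)) w, w⟫| := le_abs_self _
        _ ≤ 33 * ε * ‖net n d W y - net n d W z‖ * ‖net n d W y - net n d W z‖ := hRR
        _ = 33 * ε * ‖w‖^2 := by rw [hw, hGy, hGz]; ring
    have h2 := Phi_self (net n d W y0) w
    linarith
  have hcoord : ∀ i : Fin m,
      ((absVecE (mulVecE A Gy) - absVecE (mulVecE A Gz)) i)^2
        ≤ (mulVecE (Asign A Gy) w i)^2 + (mulVecE (Asign A Gz) w i)^2 := by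
    intro i
    have hXi : (absVecE (mulVecE A Gy) - absVecE (mulVecE A Gz)) i
        = |A.mulVec Gy i| - |A.mulVec Gz i| := rfl
    rw [hXi, hAs y i, hAs z i]
    exact sign_sq _ _
  calc ‖absVecE (mulVecE A Gy) - absVecE (mulVecE A Gz)‖^2
      = ∑ i, ((absVecE (mulVecE A Gy) - absVecE (mulVecE A Gz)) i)^2 := normsqE _
    _ ≤ ∑ i, ((mulVecE (Asign A Gy) w i)^2 + (mulVecE (Asign A Gz) w i)^2) :=
        Finset.sum_le_sum fun i _ => hcoord i
    _ = ‖mulVecE (Asign A Gy) w‖^2 + ‖mulVecE (Asign A Gz) w‖^2 := by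
        rw [Finset.sum_add_distrib, normsqE, normsqE]
    _ ≤ (1+33*ε)*‖w‖^2 + (1+33*ε)*‖w‖^2 := add_le_add (hterm y) (hterm z)
    _ = 2*(1+33*ε)*‖w‖^2 := by ring

lemma eps_num {d : ℕ} {ε : ℝ} (hd : (2:ℝ) ≤ (d:ℝ)) (hε : 0 < ε)
    (hK : 100 * (d:ℝ)^3 * Real.sqrt ε ≤ 1) :
    2*(1+33*ε)*(1/2+ε)^d ≤ 4*(1/2:ℝ)^d := by
  have hd0 : (0:ℝ) < (d:ℝ) := by linarith
  have hs : Real.sqrt ε ≤ 1/(100*(d:ℝ)^3) := by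
    rw [le_div_iff₀ (by positivity)]
    nlinarith [hK]
  have hεe : ε ≤ 1/(10000*(d:ℝ)^6) := by
    have h1 : ε = Real.sqrt ε ^ 2 := (Real.sq_sqrt hε.le).symm
    have h2 : Real.sqrt ε ^ 2 ≤ (1/(100*(d:ℝ)^3))^2 :=
      pow_le_pow_left₀ (Real.sqrt_nonneg _) hs 2
    rw [h1]
    calc Real.sqrt ε ^ 2 ≤ (1/(100*(d:ℝ)^3))^2 := h2
      _ = 1/(10000*(d:ℝ)^6) := by ring
  have hd6 : (64:ℝ) ≤ (d:ℝ)^6 := by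
    calc (64:ℝ) = 2^6 := by norm_num
      _ ≤ (d:ℝ)^6 := pow_le_pow_left₀ (by norm_num) hd 6
  have hd5 : (32:ℝ) ≤ (d:ℝ)^5 := by
    calc (32:ℝ) = 2^5 := by norm_num
      _ ≤ (d:ℝ)^5 := pow_le_pow_left₀ (by norm_num) hd 5
  have hε1 : ε ≤ 1/640000 := by
    calc ε ≤ 1/(10000*(d:ℝ)^6) := hεe
      _ ≤ 1/640000 := by
        apply one_div_le_one_div_of_le (by norm_num)
        nlinarith
  have hεd : (d:ℝ)*ε ≤ 1/320000 := by
    calc (d:ℝ)*ε ≤ (d:ℝ)*(1/(10000*(d:ℝ)^6)) := mul_le_mul_of_nonneg_left hεe hd0.le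
      _ = 1/(10000*(d:ℝ)^5) := by field_simp
      _ ≤ 1/320000 := by
        apply one_div_le_one_div_of_le (by norm_num)
        nlinarith
  have hb1 : 1 + (d:ℝ) * (-(2*ε)) ≤ (1 + (-(2*ε)))^d := one_add_mul_le_pow (by nlinarith) d
  have hb2 : (1+2*ε)^d * (1-2*ε)^d = ((1+2*ε)*(1-2*ε))^d := (mul_pow _ _ _).symm
  have hb3 : ((1+2*ε)*(1-2*ε))^d ≤ 1 := by
    apply pow_le_one₀ (by nlinarith) (by nlinarith)
  have hP0 : (0:ℝ) ≤ (1+2*ε)^d := by positivity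
  have hkey : (1+2*ε)^d * (1 - 2*(d:ℝ)*ε) ≤ 1 := by
    have h4 : (1 - 2*(d:ℝ)*ε) ≤ (1-2*ε)^d := by
      have h5 : 1 + (d:ℝ)*(-(2*ε)) = 1 - 2*(d:ℝ)*ε := by ring
      have h6 : (1 + (-(2*ε))) = 1 - 2*ε := by ring
      rw [h5, h6] at hb1
      exact hb1
    calc (1+2*ε)^d * (1-2*(d:ℝ)*ε) ≤ (1+2*ε)^d * (1-2*ε)^d :=
        mul_le_mul_of_nonneg_left h4 hP0
      _ = ((1+2*ε)*(1-2*ε))^d := hb2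
      _ ≤ 1 := hb3
  have hdP : (d:ℝ)*ε*(1+2*ε)^d ≤ (1/320000)*(1+2*ε)^d :=
    mul_le_mul_of_nonneg_right hεd hP0
  have hP2 : (1+2*ε)^d ≤ 2 := by nlinarith [hkey, hdP, hP0]
  have h33 : 33*ε*(1+2*ε)^d ≤ 66*ε := by nlinarith [hP2, hε.le]
  have hfin : (1+33*ε)*(1+2*ε)^d ≤ 2 := by nlinarith [hkey, hdP, h33, hε1, hP0]
  have hhalf : ((1:ℝ)/2+ε)^d = (1/2:ℝ)^d * (1+2*ε)^d := by
    rw [← mul_pow]; congr 1; ring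
  rw [hhalf]
  have h12 : (0:ℝ) < (1/2:ℝ)^d := by positivity
  nlinarith [mul_le_mul_of_nonneg_left hfin h12.le]

lemma c_le_rpow {d : ℕ} {c : ℝ} (hc0 : 0 ≤ c) (hc2 : c^2 ≤ 4*(1/2:ℝ)^d) :
    c ≤ 2/(2:ℝ)^((d:ℝ)/2) := by
  have hs : (0:ℝ) < (2:ℝ)^((d:ℝ)/2) := Real.rpow_pos_of_pos (by norm_num) _
  have hs2 : ((2:ℝ)^((d:ℝ)/2))^2 = (2:ℝ)^d := by
    rw [← Real.rpow_natCast ((2:ℝ)^((d:ℝ)/2)) 2, ← Real.rpow_mul (by norm_num)]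
    rw [show ((d:ℝ)/2) * ((2:ℕ):ℝ) = (d:ℝ) by push_cast; ring]
    rw [Real.rpow_natCast]
  have htarget : (2/(2:ℝ)^((d:ℝ)/2))^2 = 4*(1/2:ℝ)^d := by
    rw [div_pow, hs2]
    rw [show ((2:ℝ))^2 = 4 by norm_num]
    rw [one_div, inv_pow]
    rw [div_eq_mul_inv]
  calc c = Real.sqrt (c^2) := (Real.sqrt_sq hc0).symm
    _ ≤ Real.sqrt ((2/(2:ℝ)^((d:ℝ)/2))^2) := Real.sqrt_le_sqrt (by rw [htarget]; exact hc2)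
    _ = 2/(2:ℝ)^((d:ℝ)/2) := Real.sqrt_sq (by positivity)

lemma quad_bound {k m : ℕ} (F : EuclideanSpace ℝ (Fin k) → EuclideanSpace ℝ (Fin m))
    (c : ℝ) (hc : 0 ≤ c) (hF : ∀ y z, ‖F y - F z‖ ≤ c * ‖y - z‖)
    (xs : EuclideanSpace ℝ (Fin k)) (η : EuclideanSpace ℝ (Fin m))
    (y y' : EuclideanSpace ℝ (Fin k)) :
    |(1/2)*‖F y' - (F xs + η)‖^2 - (1/2)*‖F y - (F xs + η)‖^2|
      ≤ (c*‖y'-y‖) * ((c*(‖y-xs‖+‖y'-xs‖)+2*‖η‖)/2) := by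
  set a' := F y' - (F xs + η) with ha'
  set a := F y - (F xs + η) with ha
  have hdiff : a' - a = F y' - F y := by rw [ha', ha]; abel
  have h1 : |‖a'‖ - ‖a‖| ≤ c * ‖y' - y‖ := by
    calc |‖a'‖ - ‖a‖| ≤ ‖a' - a‖ := abs_norm_sub_norm_le _ _
      _ = ‖F y' - F y‖ := by rw [hdiff]
      _ ≤ c * ‖y' - y‖ := hF y' y
  have h2 : ‖a‖ ≤ c * ‖y - xs‖ + ‖η‖ := by
    calc ‖a‖ = ‖(F y - F xs) - η‖ := by rw [ha]; congr 1; abel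
      _ ≤ ‖F y - F xs‖ + ‖η‖ := norm_sub_le _ _
      _ ≤ c * ‖y - xs‖ + ‖η‖ := by linarith [hF y xs]
  have h3 : ‖a'‖ ≤ c * ‖y' - xs‖ + ‖η‖ := by
    calc ‖a'‖ = ‖(F y' - F xs) - η‖ := by rw [ha']; congr 1; abel
      _ ≤ ‖F y' - F xs‖ + ‖η‖ := norm_sub_le _ _
      _ ≤ c * ‖y' - xs‖ + ‖η‖ := by linarith [hF y' xs]
  have hfact : (1/2)*‖a'‖^2 - (1/2)*‖a‖^2 = (‖a'‖ - ‖a‖) * ((‖a'‖ + ‖a‖)/2) := by ring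
  rw [hfact, abs_mul]
  apply mul_le_mul h1
  · rw [abs_of_nonneg (by positivity)]
    have := norm_nonneg a'
    have := norm_nonneg a
    linarith
  · positivity
  · positivity

end Aux


set_option maxHeartbeats 1000000 in
/-- upper bound on the norm of any Clarke subgradient of `f`. -/

theorem statement_13 :
    ∃ K > (0 : ℝ), ∃ C > (0 : ℝ), ∀ (n : ℕ → ℕ) (d : ℕ), 2 ≤ d → ∀ m : ℕ,
      (∀ i, i < d → n i < n (i + 1)) →
      ∀ (W : ∀ i : Fin d, Matrix (Fin (n (i + 1))) (Fin (n i)) ℝ)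
        (A : Matrix (Fin m) (Fin (n d)) ℝ)
        (xstar : EuclideanSpace ℝ (Fin (n 0))) (η : EuclideanSpace ℝ (Fin m)),
        xstar ≠ 0 →
        ∀ ε : ℝ, 0 < ε → K * (d : ℝ) ^ 3 * Real.sqrt ε ≤ 1 →
        RRCP n d m W A ε → (∀ i : Fin d, WDC (W i) ε) →
        ∀ x : EuclideanSpace ℝ (Fin (n 0)), x ≠ 0 →
        ∀ v ∈ clarkeSubdiff (objf n d m W A xstar η) x,
          ‖v‖ ≤ C * (d : ℝ) / 2 ^ d * max ‖x‖ ‖xstar‖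
              + 2 / (2 : ℝ) ^ ((d : ℝ) / 2) * ‖η‖ := by
  refine ⟨100, by norm_num, 12, by norm_num, ?_⟩
  intro n d hd m _hn W A xstar η hxstar ε hε hK hR hWdc x hx v hv
  have hε0 : (0:ℝ) ≤ ε := hε.le
  have hd2 : (2:ℝ) ≤ (d:ℝ) := by exact_mod_cast hd
  have hd1 : (1:ℝ) ≤ (d:ℝ) := by linarith
  have hsmall : 2*(1+33*ε)*(1/2+ε)^d ≤ 4*(1/2:ℝ)^d := eps_num hd2 hε hK
  set f := objf n d m W A xstar η with hf
  set c : ℝ := Real.sqrt (2*(1+33*ε)*(1/2+ε)^d) with hc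
  have hc0 : 0 ≤ c := Real.sqrt_nonneg _
  have hcsq : c^2 = 2*(1+33*ε)*(1/2+ε)^d := Real.sq_sqrt (by positivity)
  have hc2 : c^2 ≤ 4*(1/2:ℝ)^d := by rw [hcsq]; exact hsmall
  have hcr : c ≤ 2/(2:ℝ)^((d:ℝ)/2) := c_le_rpow hc0 hc2
  set F : EuclideanSpace ℝ (Fin (n 0)) → EuclideanSpace ℝ (Fin m) :=
    fun y => absVecE (mulVecE A (net n d W y)) with hF
  have hPL : ∀ y z, ‖F y - F z‖ ≤ c * ‖y - z‖ := by
    intro y z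
    have h1 := absdiff_sq n d m W A hR y z
    have h2 := netLip n hε0 d W hWdc y z
    have h3 : ‖net n d W y - net n d W z‖^2 ≤ (1/2+ε)^d * ‖y - z‖^2 := by
      have h4 : ((Real.sqrt (1/2 + ε))^d)^2 = (1/2+ε)^d := by
        rw [← pow_mul, mul_comm, pow_mul, Real.sq_sqrt (by linarith)]
      nlinarith [norm_nonneg (net n d W y - net n d W z), norm_nonneg (y - z),
        Real.sqrt_nonneg (1/2+ε), pow_nonneg (Real.sqrt_nonneg (1/2+ε)) d]
    have h5 : ‖F y - F z‖^2 ≤ c^2 * ‖y - z‖^2 := by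
      rw [hcsq]
      calc ‖F y - F z‖^2 ≤ 2*(1+33*ε)*‖net n d W y - net n d W z‖^2 := h1
        _ ≤ 2*(1+33*ε)*((1/2+ε)^d * ‖y - z‖^2) := by
            apply mul_le_mul_of_nonneg_left h3 (by positivity)
        _ = 2*(1+33*ε)*(1/2+ε)^d*‖y - z‖^2 := by ring
    calc ‖F y - F z‖ = Real.sqrt (‖F y - F z‖^2) := (Real.sqrt_sq (norm_nonneg _)).symm
      _ ≤ Real.sqrt (c^2 * ‖y - z‖^2) := Real.sqrt_le_sqrt h5
      _ = c * ‖y - z‖ := by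
          rw [Real.sqrt_mul (by positivity), Real.sqrt_sq (norm_nonneg _),
            Real.sqrt_sq hc0]
  set M : ℝ := max ‖x‖ ‖xstar‖ with hM
  have hMpos : 0 < M := lt_of_lt_of_le (norm_pos_iff.2 hx) (le_max_left _ _)
  set B : ℝ := 12 * (d:ℝ) / 2^d * M + 2/(2:ℝ)^((d:ℝ)/2) * ‖η‖ with hB
  have hBnn : 0 ≤ B := by positivity
  have key : ∀ u : EuclideanSpace ℝ (Fin (n 0)), clarkeDeriv f x u ≤ B * ‖u‖ := by
    intro u
    set δ : ℝ := M / (1 + ‖u‖) with hδdef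
    have hδpos : 0 < δ := by positivity
    have hδM : δ * (1 + ‖u‖) = M := by
      rw [hδdef]; field_simp
    have hδleM : δ ≤ M := by nlinarith [norm_nonneg u, hδpos]
    have hev : ∀ᶠ p : (EuclideanSpace ℝ (Fin (n 0))) × ℝ in
        (nhds x) ×ˢ (nhdsWithin 0 (Set.Ioi 0)),
        |(f (p.1 + p.2 • u) - f p.1) / p.2| ≤ B * ‖u‖ := by
      have hball : ∀ᶠ y in nhds x, ‖y - x‖ < δ := by
        filter_upwards [Metric.ball_mem_nhds x hδpos] with y hy
        rw [Metric.mem_ball, dist_eq_norm] at hy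
        exact hy
      have hIoo : ∀ᶠ t in nhdsWithin (0:ℝ) (Set.Ioi 0), t ∈ Set.Ioo (0:ℝ) δ :=
        Filter.eventually_of_mem (Ioo_mem_nhdsGT_of_mem ⟨le_refl _, hδpos⟩) fun t ht => ht
      filter_upwards [hball.prod_mk hIoo] with p hp
      obtain ⟨hy, ht⟩ := hp
      set y := p.1
      set t := p.2
      have ht0 : 0 < t := ht.1
      have htδ : t < δ := ht.2
      have hq : |f (y + t • u) - f y|
          ≤ (c*‖(y + t • u) - y‖) * ((c*(‖y - xstar‖+‖(y + t • u) - xstar‖)+2*‖η‖)/2) := by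
        have hq0 := quad_bound F c hc0 hPL xstar η y (y + t • u)
        have hobj : ∀ w, f w = (1/2)*‖F w - (F xstar + η)‖^2 := by
          intro w
          rw [hf, hF]
          rfl
        rw [hobj, hobj]
        exact hq0
      have hyy : ‖(y + t • u) - y‖ = t * ‖u‖ := by
        rw [add_sub_cancel_left, norm_smul, Real.norm_eq_abs, abs_of_pos ht0]
      have hyx : ‖y - xstar‖ ≤ δ + 2 * M := by
        calc ‖y - xstar‖ = ‖(y - x) + (x - xstar)‖ := by congr 1; abel
          _ ≤ ‖y - x‖ + ‖x - xstar‖ := norm_add_le _ _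
          _ ≤ ‖y - x‖ + (‖x‖ + ‖xstar‖) := by linarith [norm_sub_le x xstar]
          _ ≤ δ + 2 * M := by
              have h6 : ‖x‖ ≤ M := le_max_left _ _
              have h7 : ‖xstar‖ ≤ M := le_max_right _ _
              linarith [hy.le]
      have hyx' : ‖(y + t • u) - xstar‖ ≤ δ + 2 * M + δ * ‖u‖ := by
        calc ‖(y + t • u) - xstar‖ = ‖(y - xstar) + t • u‖ := by congr 1; abel
          _ ≤ ‖y - xstar‖ + ‖t • u‖ := norm_add_le _ _
          _ ≤ (δ + 2 * M) + δ * ‖u‖ := by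
              have h8 : ‖t • u‖ = t * ‖u‖ := by
                rw [norm_smul, Real.norm_eq_abs, abs_of_pos ht0]
              rw [h8]
              have h9 : t * ‖u‖ ≤ δ * ‖u‖ :=
                mul_le_mul_of_nonneg_right htδ.le (norm_nonneg u)
              linarith [hyx]
      have hsum : ‖y - xstar‖ + ‖(y + t • u) - xstar‖ ≤ 6 * M := by
        have h14 : δ + δ * ‖u‖ ≤ M := le_of_eq (by rw [← hδM]; ring)
        linarith [hδleM]
      have hfd : |f (y + t • u) - f y| ≤ (c * (t * ‖u‖)) * ((c * (6 * M) + 2*‖η‖)/2) := by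
        have hq2 := hq
        rw [hyy] at hq2
        calc |f (y + t • u) - f y|
            ≤ (c*(t*‖u‖)) * ((c*(‖y - xstar‖+‖(y + t • u) - xstar‖)+2*‖η‖)/2) := hq2
          _ ≤ (c * (t * ‖u‖)) * ((c * (6 * M) + 2*‖η‖)/2) := by
              apply mul_le_mul_of_nonneg_left _ (by positivity)
              have h10 : c*(‖y - xstar‖+‖(y + t • u) - xstar‖) ≤ c * (6*M) :=
                mul_le_mul_of_nonneg_left hsum hc0
              linarith
      have hBc : c * ((c * (6 * M) + 2*‖η‖)/2) ≤ B := by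
        have h3c : 3 * c^2 ≤ 12 * (d:ℝ) / 2^d := by
          have h11 : (1/2:ℝ)^d = 1/2^d := by
            rw [div_pow, one_pow]
          have h12 : 3 * c^2 ≤ 12 * (1/2:ℝ)^d := by linarith [hc2]
          calc 3 * c^2 ≤ 12 * (1/2:ℝ)^d := h12
            _ = 12 / 2^d := by rw [h11]; ring
            _ ≤ 12 * (d:ℝ) / 2^d := by
                apply (div_le_div_iff_of_pos_right (by positivity)).2
                nlinarith
        have hcη : c * ‖η‖ ≤ 2/(2:ℝ)^((d:ℝ)/2) * ‖η‖ :=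
          mul_le_mul_of_nonneg_right hcr (norm_nonneg η)
        have hexp : c * ((c * (6 * M) + 2*‖η‖)/2) = 3 * c^2 * M + c * ‖η‖ := by ring
        rw [hexp, hB]
        have h13 : 3 * c^2 * M ≤ 12 * (d:ℝ) / 2^d * M :=
          mul_le_mul_of_nonneg_right h3c hMpos.le
        linarith
      rw [abs_div, abs_of_pos ht0, div_le_iff₀ ht0]
      calc |f (y + t • u) - f y| ≤ (c * (t * ‖u‖)) * ((c * (6 * M) + 2*‖η‖)/2) := hfd
        _ = (c * ((c * (6 * M) + 2*‖η‖)/2)) * ‖u‖ * t := by ring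
        _ ≤ B * ‖u‖ * t := by
            apply mul_le_mul_of_nonneg_right _ ht0.le
            exact mul_le_mul_of_nonneg_right hBc (norm_nonneg u)
    have hupper : ∀ᶠ p : (EuclideanSpace ℝ (Fin (n 0))) × ℝ in
        (nhds x) ×ˢ (nhdsWithin 0 (Set.Ioi 0)),
        (fun p : (EuclideanSpace ℝ (Fin (n 0))) × ℝ =>
          (f (p.1 + p.2 • u) - f p.1) / p.2) p ≤ B * ‖u‖ :=
      hev.mono fun p hp => le_of_abs_le hp
    have hlower : ∀ᶠ p : (EuclideanSpace ℝ (Fin (n 0))) × ℝ in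
        (nhds x) ×ˢ (nhdsWithin 0 (Set.Ioi 0)),
        -(B * ‖u‖) ≤ (fun p : (EuclideanSpace ℝ (Fin (n 0))) × ℝ =>
          (f (p.1 + p.2 • u) - f p.1) / p.2) p :=
      hev.mono fun p hp => neg_le_of_abs_le hp
    exact Filter.limsup_le_of_le
      (Filter.isCoboundedUnder_le_of_eventually_le _ hlower) hupper
  have hvv := hv v
  have hvB : ‖v‖^2 ≤ B * ‖v‖ := by
    calc ‖v‖^2 = ⟪v, v⟫ := (real_inner_self_eq_norm_sq v).symm
      _ ≤ clarkeDeriv f x v := hvv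
      _ ≤ B * ‖v‖ := key v
  have hnv : ‖v‖ ≤ B := by
    rcases eq_or_lt_of_le (norm_nonneg v) with h0 | h0
    · rw [← h0]; exact hBnn
    · nlinarith [hvB]
  calc ‖v‖ ≤ B := hnv
    _ = 12 * (d:ℝ) / 2 ^ d * max ‖x‖ ‖xstar‖ + 2 / (2:ℝ) ^ ((d:ℝ) / 2) * ‖η‖ := rfl


end DPR
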